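/- Let C ⊆ ℝⁿ be a convex set. Let f : ℝⁿ → ℝ be L_f-smooth and let g_i : ℝⁿ → ℝ, i = 1,…,m, be L_{g_i}-smooth. For τ > 0 define the quadratic penalty function P_τ(x) = f(x) + (τ/2)·Σ_{i=1}^m max(0, g_i(x))². Suppose that for each i, ‖∇g_i(x)‖ ≤ M_{i1} and max(0, g_i(x)) ≤ M_{i2} for all x ∈ C. Then ∇P_τ is Lipschitz continuous on C with constant L_{τ,C} = L_f + τ·Σ_{i=1}^m (M_{i1}² + M_{i2}·L_{g_i}); that is, ‖∇P_τ(x) − ∇P_τ(y)‖ ≤ L_{τ,C}·‖x − y‖ for all x, y ∈ C. -/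

import Mathlib

set_option maxHeartbeats 1000000
open InnerProductSpace Filter

lemma hasDerivAt_maxsq (t : ℝ) :
    HasDerivAt (fun s : ℝ => max 0 s ^ 2) (2 * max 0 t) t := by
  rcases lt_trichotomy t 0 with h | h | h
  · have hev : (fun s : ℝ => max 0 s ^ 2) =ᶠ[nhds t] fun _ => (0 : ℝ) := by
      filter_upwards [gt_mem_nhds h] with s hs
      simp [max_eq_left hs.le]
    have : HasDerivAt (fun _ : ℝ => (0 : ℝ)) (2 * max 0 t) t := by
      simpa [max_eq_left h.le] using hasDerivAt_const t (0 : ℝ)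
    exact this.congr_of_eventuallyEq hev
  · subst h
    rw [hasDerivAt_iff_isLittleO]
    have h1 : (fun s : ℝ => max 0 s ^ 2) =O[nhds (0 : ℝ)] fun s => s ^ 2 := by
      apply Asymptotics.isBigO_of_le
      intro s
      have : |max 0 s| ≤ |s| := by
        rcases le_total s 0 with hs | hs
        · simp [max_eq_left hs]
        · simp [max_eq_right hs]
      simpa [abs_pow] using pow_le_pow_left₀ (abs_nonneg _) this 2
    have h2 : (fun s : ℝ => s ^ 2) =o[nhds (0 : ℝ)] fun s => s := by
      have := (hasDerivAt_pow 2 (0 : ℝ)).isLittleO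
      simpa using this
    have := h1.trans_isLittleO h2
    simpa using this
  · have hev : (fun s : ℝ => max 0 s ^ 2) =ᶠ[nhds t] fun s => s ^ 2 := by
      filter_upwards [lt_mem_nhds h] with s hs
      simp [max_eq_right hs.le]
    have : HasDerivAt (fun s : ℝ => s ^ 2) (2 * max 0 t) t := by
      simpa [max_eq_right h.le, mul_comm] using hasDerivAt_pow 2 t
    exact this.congr_of_eventuallyEq hev

theorem stmt3 {n m : ℕ} (C : Set (EuclideanSpace ℝ (Fin n))) (hC : Convex ℝ C)
    (f : EuclideanSpace ℝ (Fin n) → ℝ) (g : Fin m → EuclideanSpace ℝ (Fin n) → ℝ)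
    (Lf : ℝ) (hf : ContDiff ℝ 1 f)
    (hfLip : ∀ x y, ‖gradient f x - gradient f y‖ ≤ Lf * ‖x - y‖)
    (Lg : Fin m → ℝ) (hg : ∀ i, ContDiff ℝ 1 (g i))
    (hgLip : ∀ i, ∀ x y, ‖gradient (g i) x - gradient (g i) y‖ ≤ Lg i * ‖x - y‖)
    (τ : ℝ) (hτ : 0 < τ)
    (M₁ M₂ : Fin m → ℝ)
    (hM₁ : ∀ i, ∀ x ∈ C, ‖gradient (g i) x‖ ≤ M₁ i)
    (hM₂ : ∀ i, ∀ x ∈ C, max 0 (g i x) ≤ M₂ i) :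
    ∀ x ∈ C, ∀ y ∈ C,
      ‖gradient (fun z => f z + (τ / 2) * ∑ i, max 0 (g i z) ^ 2) x -
          gradient (fun z => f z + (τ / 2) * ∑ i, max 0 (g i z) ^ 2) y‖ ≤
        (Lf + τ * ∑ i, (M₁ i ^ 2 + M₂ i * Lg i)) * ‖x - y‖ := by
  intro x hx y hy
  classical
  have keynorm : ∀ (φ : EuclideanSpace ℝ (Fin n) → ℝ) (z w : EuclideanSpace ℝ (Fin n)),
      ‖gradient φ z - gradient φ w‖ = ‖fderiv ℝ φ z - fderiv ℝ φ w‖ := by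
    intro φ z w
    rw [gradient, gradient, ← map_sub, LinearIsometryEquiv.norm_map]
  have keynorm1 : ∀ (φ : EuclideanSpace ℝ (Fin n) → ℝ) (z : EuclideanSpace ℝ (Fin n)), ‖gradient φ z‖ = ‖fderiv ℝ φ z‖ := by
    intro φ z
    rw [gradient, LinearIsometryEquiv.norm_map]
  have hM1nn : ∀ i, 0 ≤ M₁ i := fun i => le_trans (norm_nonneg _) (hM₁ i x hx)
  have hM2nn : ∀ i, 0 ≤ M₂ i := fun i => le_trans (le_max_left _ _) (hM₂ i x hx)
  have hgd : ∀ i (z : EuclideanSpace ℝ (Fin n)), HasFDerivAt (g i) (fderiv ℝ (g i) z) z :=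
    fun i z => ((hg i).differentiable one_ne_zero z).hasFDerivAt
  have hP : ∀ z : EuclideanSpace ℝ (Fin n), HasFDerivAt (fun z => f z + (τ / 2) * ∑ i, max 0 (g i z) ^ 2)
      (fderiv ℝ f z + (τ / 2) • ∑ i, (2 * max 0 (g i z)) • fderiv ℝ (g i) z) z := by
    intro z
    have h1 : ∀ i : Fin m, HasFDerivAt (fun w => max 0 (g i w) ^ 2)
        ((2 * max 0 (g i z)) • fderiv ℝ (g i) z) z := fun i =>
      (hasDerivAt_maxsq (g i z)).comp_hasFDerivAt z (hgd i z)
    exact ((hf.differentiable one_ne_zero z).hasFDerivAt).add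
      ((HasFDerivAt.fun_sum fun i (_ : i ∈ Finset.univ) => h1 i).const_mul (τ / 2))
  rw [keynorm, (hP x).fderiv, (hP y).fderiv]
  have hgiLip : ∀ i, |g i x - g i y| ≤ M₁ i * ‖x - y‖ := by
    intro i
    have := hC.norm_image_sub_le_of_norm_fderiv_le
      (fun z _ => (hg i).differentiable one_ne_zero z)
      (fun z hz => by rw [← keynorm1]; exact hM₁ i z hz) hy hx
    simpa [Real.norm_eq_abs] using this
  have term_bound : ∀ i, ‖(2 * max 0 (g i x)) • fderiv ℝ (g i) x -
      (2 * max 0 (g i y)) • fderiv ℝ (g i) y‖ ≤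
      2 * (M₁ i ^ 2 + M₂ i * Lg i) * ‖x - y‖ := by
    intro i
    set a := max 0 (g i x)
    set b := max 0 (g i y)
    set u := fderiv ℝ (g i) x
    set v := fderiv ℝ (g i) y
    have hsplit : (2 * a) • u - (2 * b) • v = (2 * a - 2 * b) • u + (2 * b) • (u - v) := by
      simp only [sub_smul, smul_sub]; abel
    have hab : |a - b| ≤ M₁ i * ‖x - y‖ := by
      have h1 : |a - b| ≤ |g i x - g i y| := by
        have := abs_max_sub_max_le_abs (g i x) (g i y) 0
        simpa [max_comm, a, b] using this
      exact h1.trans (hgiLip i)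
    have hu : ‖u‖ ≤ M₁ i := by rw [← keynorm1]; exact hM₁ i x hx
    have huv : ‖u - v‖ ≤ Lg i * ‖x - y‖ := by
      rw [← keynorm]; exact hgLip i x y
    have hb0 : 0 ≤ b := le_max_left _ _
    have hbM : b ≤ M₂ i := hM₂ i y hy
    have t1 : |2 * a - 2 * b| * ‖u‖ ≤ (2 * (M₁ i * ‖x - y‖)) * M₁ i := by
      apply mul_le_mul _ hu (norm_nonneg _)
      · have : 0 ≤ M₁ i * ‖x - y‖ := mul_nonneg (hM1nn i) (norm_nonneg _)
        linarith
      · have h2ab : |2 * a - 2 * b| = 2 * |a - b| := by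
          rw [← mul_sub, abs_mul]; norm_num
        rw [h2ab]; linarith
    have t2 : |2 * b| * ‖u - v‖ ≤ (2 * M₂ i) * (Lg i * ‖x - y‖) := by
      apply mul_le_mul _ huv (norm_nonneg _) _
      · rw [abs_of_nonneg (by linarith : (0:ℝ) ≤ 2 * b)]; linarith
      · have := hM2nn i; linarith
    have tsplit : ‖(2 * a) • u - (2 * b) • v‖ ≤ |2 * a - 2 * b| * ‖u‖ + |2 * b| * ‖u - v‖ := by
      rw [hsplit]
      refine (norm_add_le _ _).trans ?_
      rw [norm_smul, norm_smul, Real.norm_eq_abs, Real.norm_eq_abs]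
    nlinarith [tsplit, t1, t2]
  have sum_bound : ‖(∑ i, (2 * max 0 (g i x)) • fderiv ℝ (g i) x) -
      ∑ i, (2 * max 0 (g i y)) • fderiv ℝ (g i) y‖ ≤
      (∑ i, 2 * (M₁ i ^ 2 + M₂ i * Lg i)) * ‖x - y‖ := by
    rw [← Finset.sum_sub_distrib, Finset.sum_mul]
    exact (norm_sum_le _ _).trans (Finset.sum_le_sum fun i _ => term_bound i)
  have hf_bound : ‖fderiv ℝ f x - fderiv ℝ f y‖ ≤ Lf * ‖x - y‖ := by
    rw [← keynorm]; exact hfLip x y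
  set Fx := fderiv ℝ f x
  set Fy := fderiv ℝ f y
  set Sx := ∑ i, (2 * max 0 (g i x)) • fderiv ℝ (g i) x with hSxdef
  set Sy := ∑ i, (2 * max 0 (g i y)) • fderiv ℝ (g i) y with hSydef
  have hsplit2 : (Fx + (τ / 2) • Sx) - (Fy + (τ / 2) • Sy)
      = (Fx - Fy) + (τ / 2) • (Sx - Sy) := by
    rw [smul_sub]; abel
  have hS : ‖Sx - Sy‖ ≤ (∑ i, 2 * (M₁ i ^ 2 + M₂ i * Lg i)) * ‖x - y‖ := sum_bound
  have step : ‖(Fx + (τ / 2) • Sx) - (Fy + (τ / 2) • Sy)‖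
      ≤ Lf * ‖x - y‖ + (τ / 2) * ((∑ i, 2 * (M₁ i ^ 2 + M₂ i * Lg i)) * ‖x - y‖) := by
    rw [hsplit2]
    refine (norm_add_le _ _).trans ?_
    have : ‖(τ / 2) • (Sx - Sy)‖ = (τ / 2) * ‖Sx - Sy‖ := by
      rw [norm_smul, Real.norm_eq_abs, abs_of_pos (by linarith : (0:ℝ) < τ / 2)]
    rw [this]
    have : (τ / 2) * ‖Sx - Sy‖ ≤ (τ / 2) * ((∑ i, 2 * (M₁ i ^ 2 + M₂ i * Lg i)) * ‖x - y‖) := by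
      apply mul_le_mul_of_nonneg_left hS (by linarith)
    linarith
  refine step.trans (le_of_eq ?_)
  have hsum2 : ∑ i, 2 * (M₁ i ^ 2 + M₂ i * Lg i) = 2 * ∑ i, (M₁ i ^ 2 + M₂ i * Lg i) := by
    rw [Finset.mul_sum]
  rw [hsum2]; ring
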